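/- Let E be a finite-dimensional real inner product space with 2 ≤ dim E, let u ∈ E with t := ⟪u,u⟫ > 0, and let a₁,a₂,a₃,b₁,b₂,b₃ ∈ ℝ. Then the F-natural bilinear form G on E × E is positive definite if and only if a₁ > 0, α > 0, φ₁ > 0 and φ > 0. -/

import Mathlib

/-- The pointwise F-natural bilinear form on `E × E` determined by the six constants
`a₁, a₂, a₃, b₁, b₂, b₃` and the base vector `u`. -/
noncomputable def FNatForm {E : Type*} [NormedAddCommGroup E] [InnerProductSpace ℝ E]
    (u : E) (a₁ a₂ a₃ b₁ b₂ b₃ : ℝ) (X Y : E × E) : ℝ :=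
  (a₁ + a₃) * (inner ℝ X.1 Y.1 : ℝ) + (b₁ + b₃) * (inner ℝ X.1 u : ℝ) * (inner ℝ Y.1 u : ℝ)
    + a₂ * ((inner ℝ X.1 Y.2 : ℝ) + (inner ℝ X.2 Y.1 : ℝ))
    + b₂ * ((inner ℝ X.1 u : ℝ) * (inner ℝ Y.2 u : ℝ) + (inner ℝ X.2 u : ℝ) * (inner ℝ Y.1 u : ℝ))
    + a₁ * (inner ℝ X.2 Y.2 : ℝ) + b₁ * (inner ℝ X.2 u : ℝ) * (inner ℝ Y.2 u : ℝ)

lemma quad_pos {A B C x y : ℝ} (hA : 0 < A) (hD : 0 < A * C - B ^ 2)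
    (h : x ≠ 0 ∨ y ≠ 0) : 0 < A * x ^ 2 + 2 * B * x * y + C * y ^ 2 := by
  rcases eq_or_ne y 0 with rfl | hy
  · have hx : x ≠ 0 := by tauto
    have : 0 < x ^ 2 := by positivity
    nlinarith
  · have : 0 < y ^ 2 := by positivity
    nlinarith [sq_nonneg (A * x + B * y), mul_pos hD this]

lemma quad_nonneg {A B C x y : ℝ} (hA : 0 < A) (hD : 0 < A * C - B ^ 2) :
    0 ≤ A * x ^ 2 + 2 * B * x * y + C * y ^ 2 := by
  nlinarith [sq_nonneg (A * x + B * y), sq_nonneg y]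

lemma quad_abs_nonneg {A B C v w c : ℝ} (hA : 0 < A) (hD : 0 < A * C - B ^ 2)
    (hc : |c| ≤ v * w) :
    0 ≤ A * v ^ 2 + 2 * B * c + C * w ^ 2 := by
  have h1 : c ≤ v * w := le_trans (le_abs_self c) hc
  have h2 : -(v * w) ≤ c := neg_le_of_abs_le hc
  rcases le_or_gt 0 B with hB | hB
  · nlinarith [sq_nonneg (A * v - B * w), sq_nonneg w,
      mul_nonneg (mul_nonneg hA.le hB) (by linarith : (0:ℝ) ≤ v * w + c)]
  · nlinarith [sq_nonneg (A * v + B * w), sq_nonneg w,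
      mul_nonneg (mul_nonneg hA.le (by linarith : (0:ℝ) ≤ -B)) (by linarith : (0:ℝ) ≤ v * w - c)]

lemma quad_abs_pos {A B C v w c : ℝ} (hA : 0 < A) (hD : 0 < A * C - B ^ 2)
    (hw : 0 ≤ w) (hc : |c| ≤ v * w) (hne : 0 < v ∨ 0 < w) :
    0 < A * v ^ 2 + 2 * B * c + C * w ^ 2 := by
  have h1 : c ≤ v * w := le_trans (le_abs_self c) hc
  have h2 : -(v * w) ≤ c := neg_le_of_abs_le hc
  rcases eq_or_lt_of_le hw with rfl | hw'
  · have h : 0 < v := by rcases hne with h | h; exact h; exact absurd h (lt_irrefl 0)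
    have hc0 : c = 0 := by
      have h3 := abs_nonneg c
      have h4 : |c| ≤ 0 := by simpa using hc
      exact abs_eq_zero.mp (le_antisymm h4 h3)
    subst hc0
    have : 0 < v ^ 2 := by positivity
    nlinarith
  · have hw2 : 0 < w ^ 2 := by positivity
    rcases le_or_gt 0 B with hB | hB
    · nlinarith [sq_nonneg (A * v - B * w), mul_pos hD hw2,
        mul_nonneg (mul_nonneg hA.le hB) (by linarith : (0:ℝ) ≤ v * w + c)]
    · nlinarith [sq_nonneg (A * v + B * w), mul_pos hD hw2,
        mul_nonneg (mul_nonneg hA.le (by linarith : (0:ℝ) ≤ -B)) (by linarith : (0:ℝ) ≤ v * w - c)]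

lemma exists_orth_ne_zero {E : Type*} [NormedAddCommGroup E] [InnerProductSpace ℝ E]
    [FiniteDimensional ℝ E] (hdim : 2 ≤ Module.finrank ℝ E) (u : E) (hu : u ≠ 0) :
    ∃ v : E, (inner ℝ v u : ℝ) = 0 ∧ v ≠ 0 := by
  have h := Submodule.finrank_add_finrank_orthogonal (K := (ℝ ∙ u)) (𝕜 := ℝ) (E := E)
  have h2 : Module.finrank ℝ (ℝ ∙ u : Submodule ℝ E) = 1 := finrank_span_singleton hu
  have hpos : 0 < Module.finrank ℝ ((ℝ ∙ u)ᗮ : Submodule ℝ E) := by omega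
  obtain ⟨v, hv, hv0⟩ := Submodule.exists_mem_ne_zero_of_ne_bot (p := (ℝ ∙ u)ᗮ) (by
    intro hb
    rw [hb] at hpos
    simp at hpos)
  exact ⟨v, Submodule.mem_orthogonal_singleton_iff_inner_left.mp hv, hv0⟩

set_option maxHeartbeats 2000000 in
/-- Pointwise version of Proposition 1 (2): the F-natural form is positive definite iff
`a₁ > 0`, `α > 0`, `φ₁ > 0` and `φ > 0`, where `t = ⟪u,u⟫`, `φ₁ = a₁ + t b₁`,
`φ₂ = a₂ + t b₂`, `φ₁₃ = (a₁+a₃) + t(b₁+b₃)`, `α = a₁(a₁+a₃) − a₂²`, `φ = φ₁ φ₁₃ − φ₂²`. -/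
theorem FNatForm_posDef_iff {E : Type*} [NormedAddCommGroup E] [InnerProductSpace ℝ E]
    [FiniteDimensional ℝ E] (hdim : 2 ≤ Module.finrank ℝ E)
    (u : E) (ht : 0 < (inner ℝ u u : ℝ)) (a₁ a₂ a₃ b₁ b₂ b₃ : ℝ) :
    (∀ X : E × E, X ≠ 0 → 0 < FNatForm u a₁ a₂ a₃ b₁ b₂ b₃ X X) ↔
      (0 < a₁ ∧ 0 < a₁ * (a₁ + a₃) - a₂ ^ 2 ∧
        0 < a₁ + (inner ℝ u u : ℝ) * b₁ ∧
        0 < (a₁ + (inner ℝ u u : ℝ) * b₁) * ((a₁ + a₃) + (inner ℝ u u : ℝ) * (b₁ + b₃))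
            - (a₂ + (inner ℝ u u : ℝ) * b₂) ^ 2) := by
  have hu : u ≠ 0 := by
    intro h
    rw [h] at ht
    simp at ht
  set t : ℝ := inner ℝ u u with htdef
  have ht0 : t ≠ 0 := ne_of_gt ht
  constructor
  · intro hPD
    obtain ⟨v, hvu, hv0⟩ := exists_orth_ne_zero hdim u hu
    have huv : (inner ℝ u v : ℝ) = 0 := by rw [real_inner_comm]; exact hvu
    have hvv : (0:ℝ) < inner ℝ v v := by
      rw [real_inner_self_eq_norm_sq]
      exact pow_pos (norm_pos_iff.mpr hv0) 2
    -- a₁ > 0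
    have hA1 : 0 < a₁ := by
      have h := hPD (0, v) (by simp [Prod.ext_iff, hv0])
      have hval : FNatForm u a₁ a₂ a₃ b₁ b₂ b₃ (0, v) (0, v) = a₁ * (inner ℝ v v : ℝ) := by
        simp [FNatForm, hvu]
      rw [hval] at h
      nlinarith
    -- a₁ + a₃ > 0
    have hA13 : 0 < a₁ + a₃ := by
      have h := hPD (v, 0) (by simp [Prod.ext_iff, hv0])
      have hval : FNatForm u a₁ a₂ a₃ b₁ b₂ b₃ (v, 0) (v, 0) = (a₁ + a₃) * (inner ℝ v v : ℝ) := by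
        simp [FNatForm, hvu]
      rw [hval] at h
      nlinarith
    -- α > 0
    have hα : 0 < a₁ * (a₁ + a₃) - a₂ ^ 2 := by
      set s : ℝ := -a₂ / (a₁ + a₃) with hs
      have hsprop : (a₁ + a₃) * s = -a₂ := by
        rw [hs]; field_simp; try ring
      have h := hPD (s • v, v) (by
        intro hcontra
        exact hv0 (congrArg Prod.snd hcontra))
      have hval : FNatForm u a₁ a₂ a₃ b₁ b₂ b₃ (s • v, v) (s • v, v)
          = ((a₁ + a₃) * s ^ 2 + 2 * a₂ * s + a₁) * (inner ℝ v v : ℝ) := by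
        simp [-inner_self_eq_norm_sq_to_K, FNatForm, real_inner_smul_left, real_inner_smul_right, hvu]
        ring
      rw [hval] at h
      have hq : 0 < (a₁ + a₃) * s ^ 2 + 2 * a₂ * s + a₁ := by
        by_contra hn
        push_neg at hn
        nlinarith
      nlinarith [mul_pos hA13 hq]
    -- φ₁ > 0
    have hφ₁ : 0 < a₁ + t * b₁ := by
      have h := hPD (0, u) (by simp [Prod.ext_iff, hu])
      have hval : FNatForm u a₁ a₂ a₃ b₁ b₂ b₃ (0, u) (0, u) = a₁ * t + b₁ * t * t := by
        simp [-inner_self_eq_norm_sq_to_K, FNatForm]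
        try ring
      rw [hval] at h
      nlinarith
    -- φ > 0
    have hφ : 0 < (a₁ + t * b₁) * ((a₁ + a₃) + t * (b₁ + b₃)) - (a₂ + t * b₂) ^ 2 := by
      set s : ℝ := -(a₂ + t * b₂) / (a₁ + t * b₁) with hs
      have hsprop : (a₁ + t * b₁) * s = -(a₂ + t * b₂) := by
        rw [hs]; field_simp; try ring
      have h := hPD (u, s • u) (by
        intro hcontra
        exact hu (congrArg Prod.fst hcontra))
      have hval : FNatForm u a₁ a₂ a₃ b₁ b₂ b₃ (u, s • u) (u, s • u)
          = t * (((a₁ + a₃) + t * (b₁ + b₃)) + 2 * (a₂ + t * b₂) * s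
              + (a₁ + t * b₁) * s ^ 2) := by
        simp [-inner_self_eq_norm_sq_to_K, FNatForm, real_inner_smul_left, real_inner_smul_right]
        try ring
      rw [hval] at h
      have hq : 0 < ((a₁ + a₃) + t * (b₁ + b₃)) + 2 * (a₂ + t * b₂) * s
          + (a₁ + t * b₁) * s ^ 2 := by
        by_contra hn
        push_neg at hn
        nlinarith
      nlinarith [mul_pos hφ₁ hq]
    exact ⟨hA1, hα, hφ₁, hφ⟩
  · rintro ⟨hA1, hα, hφ₁, hφ⟩ X hX
    set p : ℝ := (inner ℝ X.1 u : ℝ) / t with hp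
    set q : ℝ := (inner ℝ X.2 u : ℝ) / t with hq
    set V : E := X.1 - p • u with hV
    set W : E := X.2 - q • u with hW
    have hVu : (inner ℝ V u : ℝ) = 0 := by
      rw [hV, inner_sub_left, real_inner_smul_left, hp, ← htdef, div_mul_cancel₀ _ ht0, sub_self]
    have hWu : (inner ℝ W u : ℝ) = 0 := by
      rw [hW, inner_sub_left, real_inner_smul_left, hq, ← htdef, div_mul_cancel₀ _ ht0, sub_self]
    have huV : (inner ℝ u V : ℝ) = 0 := by rw [real_inner_comm]; exact hVu
    have huW : (inner ℝ u W : ℝ) = 0 := by rw [real_inner_comm]; exact hWu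
    have hX1 : X.1 = V + p • u := by rw [hV]; abel
    have hX2 : X.2 = W + q • u := by rw [hW]; abel
    have e11 : (inner ℝ X.1 X.1 : ℝ) = (inner ℝ V V : ℝ) + p ^ 2 * t := by
      conv_lhs => rw [hX1]
      simp [-inner_self_eq_norm_sq_to_K, inner_add_left, inner_add_right, real_inner_smul_left, real_inner_smul_right,
        hVu, huV]
      ring
    have e12 : (inner ℝ X.1 X.2 : ℝ) = (inner ℝ V W : ℝ) + p * q * t := by
      conv_lhs => rw [hX1, hX2]
      simp [-inner_self_eq_norm_sq_to_K, inner_add_left, inner_add_right, real_inner_smul_left, real_inner_smul_right,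
        hVu, huW]
      ring
    have e21 : (inner ℝ X.2 X.1 : ℝ) = (inner ℝ V W : ℝ) + p * q * t := by
      rw [real_inner_comm]; exact e12
    have e22 : (inner ℝ X.2 X.2 : ℝ) = (inner ℝ W W : ℝ) + q ^ 2 * t := by
      conv_lhs => rw [hX2]
      simp [-inner_self_eq_norm_sq_to_K, inner_add_left, inner_add_right, real_inner_smul_left, real_inner_smul_right,
        hWu, huW]
      ring
    have e1u : (inner ℝ X.1 u : ℝ) = p * t := by rw [hp, div_mul_cancel₀ _ ht0]
    have e2u : (inner ℝ X.2 u : ℝ) = q * t := by rw [hq, div_mul_cancel₀ _ ht0]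
    have hVV : (inner ℝ V V : ℝ) = ‖V‖ ^ 2 := real_inner_self_eq_norm_sq V
    have hWW : (inner ℝ W W : ℝ) = ‖W‖ ^ 2 := real_inner_self_eq_norm_sq W
    have key : FNatForm u a₁ a₂ a₃ b₁ b₂ b₃ X X
        = t * ((a₁ + t * b₁) * q ^ 2 + 2 * (a₂ + t * b₂) * q * p
            + ((a₁ + a₃) + t * (b₁ + b₃)) * p ^ 2)
          + (a₁ * ‖W‖ ^ 2 + 2 * a₂ * (inner ℝ V W : ℝ) + (a₁ + a₃) * ‖V‖ ^ 2) := by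
      rw [FNatForm, e11, e12, e21, e22, e1u, e2u, hVV, hWW]
      ring
    have hcase : (q ≠ 0 ∨ p ≠ 0) ∨ (V ≠ 0 ∨ W ≠ 0) := by
      by_contra hcon
      push_neg at hcon
      obtain ⟨⟨hq0, hp0⟩, hV0, hW0⟩ := hcon
      apply hX
      have h1 : X.1 = 0 := by rw [hX1, hV0, hp0]; simp
      have h2 : X.2 = 0 := by rw [hX2, hW0, hq0]; simp
      exact Prod.ext_iff.mpr ⟨h1, h2⟩
    have hcs : |(inner ℝ V W : ℝ)| ≤ ‖W‖ * ‖V‖ := by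
      rw [mul_comm]
      exact abs_real_inner_le_norm V W
    rcases hcase with h | h
    · have h1 := quad_pos hφ₁ hφ h
      have h2 := quad_abs_nonneg hA1 hα hcs
      nlinarith [mul_pos ht h1]
    · have hne : 0 < ‖W‖ ∨ 0 < ‖V‖ := by
        rcases h with h | h
        · right; exact norm_pos_iff.mpr h
        · left; exact norm_pos_iff.mpr h
      have h1 := quad_abs_pos hA1 hα (norm_nonneg V) hcs hne
      have h2 := quad_nonneg (x := q) (y := p) hφ₁ hφ
      nlinarith [mul_nonneg ht.le h2]
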